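/- Let A₁₁ be a real q×q matrix, A₁₂ a real q×p matrix, A₂₂ a real p×p matrix, B_f1 and B₁₁ real q×m matrices, B_f2 and B₂₂ real p×m matrices, and R an invertible symmetric real m×m matrix. Define the block matrices A_f = [[A₁₁, A₁₂],[0, A₂₂]], B_f = [B_f1; B_f2], and B̃₁ = [B₁₁; B₂₂]. Suppose there exist real p×p matrices T and S, with T − S symmetric positive definite, satisfying the Lyapunov equations −A₂₂·T − T·A₂₂ᵀ + B_f2·R·B_f2ᵀ = 0 and −A₂₂·S − S·A₂₂ᵀ + B₂₂·R⁻¹·B₂₂ᵀ = 0. Then the block matrix P_f = [[0, 0],[0, (T−S)⁻¹]] is symmetric positive semidefinite and satisfies the algebraic Riccati equation P_f·A_f + A_fᵀ·P_f + P_f·(B̃₁·R⁻¹·B̃₁ᵀ − B_f·R·B_fᵀ)·P_f = 0. -/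

import Mathlib

open Matrix

/-- Implication 2) ⟹ 3) in the NI state feedback control lemma:
solutions `T, S` of the two Lyapunov equations with `T − S > 0` yield the positive
semidefinite Riccati solution `P_f = [[0,0],[0,(T−S)⁻¹]]`. -/
theorem stmt_7 {q p m : ℕ}
    (A₁₁ : Matrix (Fin q) (Fin q) ℝ) (A₁₂ : Matrix (Fin q) (Fin p) ℝ)
    (A₂₂ : Matrix (Fin p) (Fin p) ℝ)
    (Bf1 B₁₁ : Matrix (Fin q) (Fin m) ℝ) (Bf2 B₂₂ : Matrix (Fin p) (Fin m) ℝ)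
    (R : Matrix (Fin m) (Fin m) ℝ) (hRsym : Rᵀ = R) (hRu : IsUnit R.det)
    (Af : Matrix (Fin q ⊕ Fin p) (Fin q ⊕ Fin p) ℝ)
    (hAf : Af = fromBlocks A₁₁ A₁₂ 0 A₂₂)
    (Bf : Matrix (Fin q ⊕ Fin p) (Fin m) ℝ) (hBf : Bf = fromRows Bf1 Bf2)
    (B₁t : Matrix (Fin q ⊕ Fin p) (Fin m) ℝ) (hB₁t : B₁t = fromRows B₁₁ B₂₂)
    (T S : Matrix (Fin p) (Fin p) ℝ) (hTS : (T - S).PosDef)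
    (hT : -(A₂₂ * T) - T * A₂₂ᵀ + Bf2 * R * Bf2ᵀ = 0)
    (hS : -(A₂₂ * S) - S * A₂₂ᵀ + B₂₂ * R⁻¹ * B₂₂ᵀ = 0)
    (Pf : Matrix (Fin q ⊕ Fin p) (Fin q ⊕ Fin p) ℝ)
    (hPf : Pf = fromBlocks 0 0 0 (T - S)⁻¹) :
    Pf.PosSemidef ∧
    Pf * Af + Afᵀ * Pf + Pf * (B₁t * R⁻¹ * B₁tᵀ - Bf * R * Bfᵀ) * Pf = 0 := by
  set D := T - S with hD
  have hDu : IsUnit D.det := isUnit_iff_ne_zero.mpr hTS.det_pos.ne'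
  constructor
  · -- positive semidefiniteness
    have hinv : (D⁻¹).PosSemidef := hTS.posSemidef.inv
    have h := hinv.conjTranspose_mul_mul_same
      (fromCols (0 : Matrix (Fin p) (Fin q) ℝ) (1 : Matrix (Fin p) (Fin p) ℝ))
    have heq : (fromCols (0 : Matrix (Fin p) (Fin q) ℝ) (1 : Matrix (Fin p) (Fin p) ℝ))ᴴ
        * D⁻¹ * fromCols (0 : Matrix (Fin p) (Fin q) ℝ) (1 : Matrix (Fin p) (Fin p) ℝ) = Pf := by
      rw [hPf]
      rw [show (fromCols (0 : Matrix (Fin p) (Fin q) ℝ) (1 : Matrix (Fin p) (Fin p) ℝ))ᴴ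
          = fromRows 0 1 by
        ext (i|i) j <;> simp [fromCols, fromRows_apply_inl, fromRows_apply_inr, conjTranspose, Matrix.one_apply, eq_comm]]
      rw [fromRows_mul, fromRows_mul_fromCols]
      simp
    rwa [heq] at h
  · -- Riccati equation
    have hT' : Bf2 * R * Bf2ᵀ = A₂₂ * T + T * A₂₂ᵀ := by
      have h : Bf2 * R * Bf2ᵀ - (A₂₂ * T + T * A₂₂ᵀ) = 0 := by rw [← hT]; abel
      exact sub_eq_zero.mp h
    have hS' : B₂₂ * R⁻¹ * B₂₂ᵀ = A₂₂ * S + S * A₂₂ᵀ := by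
      have h : B₂₂ * R⁻¹ * B₂₂ᵀ - (A₂₂ * S + S * A₂₂ᵀ) = 0 := by rw [← hS]; abel
      exact sub_eq_zero.mp h
    have hdiff : B₂₂ * R⁻¹ * B₂₂ᵀ - Bf2 * R * Bf2ᵀ = -(A₂₂ * D) - D * A₂₂ᵀ := by
      rw [hT', hS', hD, Matrix.mul_sub, Matrix.sub_mul]; abel
    have hkey : D⁻¹ * (B₂₂ * R⁻¹ * B₂₂ᵀ - Bf2 * R * Bf2ᵀ) * D⁻¹
        = -(D⁻¹ * A₂₂) - A₂₂ᵀ * D⁻¹ := by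
      rw [hdiff]
      have h1 : D⁻¹ * (A₂₂ * D) * D⁻¹ = D⁻¹ * A₂₂ := by
        rw [Matrix.mul_assoc, Matrix.mul_assoc, mul_nonsing_inv _ hDu, Matrix.mul_one]
      have h2 : D⁻¹ * (D * A₂₂ᵀ) * D⁻¹ = A₂₂ᵀ * D⁻¹ := by
        rw [← Matrix.mul_assoc, nonsing_inv_mul _ hDu, Matrix.one_mul]
      rw [Matrix.mul_sub, Matrix.sub_mul, Matrix.mul_neg, Matrix.neg_mul, h1, h2]
    have e1 : fromRows B₁₁ B₂₂ * R⁻¹ * (fromRows B₁₁ B₂₂)ᵀ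
        = fromBlocks (B₁₁ * R⁻¹ * B₁₁ᵀ) (B₁₁ * R⁻¹ * B₂₂ᵀ)
            (B₂₂ * R⁻¹ * B₁₁ᵀ) (B₂₂ * R⁻¹ * B₂₂ᵀ) := by
      rw [transpose_fromRows, fromRows_mul, fromRows_mul_fromCols]
    have e2 : fromRows Bf1 Bf2 * R * (fromRows Bf1 Bf2)ᵀ
        = fromBlocks (Bf1 * R * Bf1ᵀ) (Bf1 * R * Bf2ᵀ)
            (Bf2 * R * Bf1ᵀ) (Bf2 * R * Bf2ᵀ) := by
      rw [transpose_fromRows, fromRows_mul, fromRows_mul_fromCols]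
    subst hAf hBf hB₁t hPf
    rw [e1, e2, show (fromBlocks A₁₁ A₁₂ 0 A₂₂)ᵀ = fromBlocks A₁₁ᵀ 0 A₁₂ᵀ A₂₂ᵀ by
      simp [fromBlocks_transpose],
      sub_eq_add_neg, fromBlocks_neg, fromBlocks_add, fromBlocks_multiply,
      fromBlocks_multiply, fromBlocks_multiply, fromBlocks_multiply,
      fromBlocks_add, fromBlocks_add]
    simp only [Matrix.zero_mul, Matrix.mul_zero, add_zero, zero_add]
    rw [← sub_eq_add_neg, hkey,
      show D⁻¹ * A₂₂ + A₂₂ᵀ * D⁻¹ + (-(D⁻¹ * A₂₂) - A₂₂ᵀ * D⁻¹) = 0 by abel]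
    simp [fromBlocks_zero]
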